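/- With the SAGA estimator S = φ_i(y) − φ_i(w_i) + (1/n)∑ φ_{i'}(w_{i'}) where each φ_i is L'-Lipschitz, one has the variance bound E_i[‖S‖²] ≤ 2‖(1/n)∑φ_i(y)‖² + 2(L')²·(1/n)∑_{i=1}^n ‖y − w_i‖². -/

import Mathlib

open Finset

abbrev Vec (n : ℕ) := EuclideanSpace ℝ (Fin n)

lemma sq_add_le {E : Type*} [NormedAddCommGroup E] (a b : E) :
    ‖a + b‖ ^ 2 ≤ 2 * ‖a‖ ^ 2 + 2 * ‖b‖ ^ 2 := by
  have h1 : ‖a + b‖ ^ 2 ≤ (‖a‖ + ‖b‖) ^ 2 :=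
    pow_le_pow_left₀ (norm_nonneg _) (norm_add_le a b) 2
  nlinarith [sq_nonneg (‖a‖ - ‖b‖)]

lemma var_le_second_moment {E : Type*} [NormedAddCommGroup E]
    [InnerProductSpace ℝ E] {n : ℕ} (hn : 0 < n) (X : Fin n → E) :
    ∑ i : Fin n, ‖X i - (n : ℝ)⁻¹ • ∑ j : Fin n, X j‖ ^ 2 ≤
      ∑ i : Fin n, ‖X i‖ ^ 2 := by
  set μ : E := (n : ℝ)⁻¹ • ∑ j : Fin n, X j with hμ
  have hsum : ∑ i : Fin n, (inner ℝ (X i) μ : ℝ) = (n : ℝ) * ‖μ‖ ^ 2 := by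
    rw [← sum_inner]
    have : (∑ i : Fin n, X i) = (n : ℝ) • μ := by
      rw [hμ, smul_smul, mul_inv_cancel₀ (by positivity : (n : ℝ) ≠ 0), one_smul]
    rw [this, inner_smul_left, real_inner_self_eq_norm_sq]
    simp
  have expand : ∀ i : Fin n, ‖X i - μ‖ ^ 2
      = ‖X i‖ ^ 2 - 2 * (inner ℝ (X i) μ : ℝ) + ‖μ‖ ^ 2 := by
    intro i
    rw [← real_inner_self_eq_norm_sq, inner_sub_sub_self,
        real_inner_self_eq_norm_sq, real_inner_self_eq_norm_sq,
        real_inner_comm μ (X i)]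
    ring
  calc ∑ i : Fin n, ‖X i - μ‖ ^ 2
      = ∑ i : Fin n, (‖X i‖ ^ 2 - 2 * (inner ℝ (X i) μ : ℝ) + ‖μ‖ ^ 2) := by
        exact Finset.sum_congr rfl fun i _ => expand i
    _ = ∑ i : Fin n, ‖X i‖ ^ 2 - 2 * ((n : ℝ) * ‖μ‖ ^ 2) + (n : ℝ) * ‖μ‖ ^ 2 := by
        rw [Finset.sum_add_distrib, Finset.sum_sub_distrib, ← Finset.mul_sum, hsum]
        simp [mul_comm]
    _ ≤ ∑ i : Fin n, ‖X i‖ ^ 2 := by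
        have : (0 : ℝ) ≤ (n : ℝ) * ‖μ‖ ^ 2 := by positivity
        linarith

/-- Variance bound for the SAGA estimator: if each `φ_i` is `L'`-Lipschitz, then
`E_i[‖S_i‖²] ≤ 2‖(1/n)∑φ_i(y)‖² + 2 L'² (1/n)∑ ‖y − w_i‖²`. -/
theorem stmt11 {n k m : ℕ} (hn : 0 < n) (L' : ℝ) (hL' : 0 < L')
    (φ : Fin n → Vec m → Vec k) (w : Fin n → Vec m) (y : Vec m)
    (hlip : ∀ i (a b : Vec m), ‖φ i a - φ i b‖ ≤ L' * ‖a - b‖) :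
    (n : ℝ)⁻¹ * ∑ i : Fin n,
        ‖φ i y - φ i (w i) + (n : ℝ)⁻¹ • ∑ i' : Fin n, φ i' (w i')‖ ^ 2 ≤
      2 * ‖(n : ℝ)⁻¹ • ∑ i : Fin n, φ i y‖ ^ 2 +
        2 * L' ^ 2 * ((n : ℝ)⁻¹ * ∑ i : Fin n, ‖y - w i‖ ^ 2) := by
  have hn' : (0 : ℝ) < (n : ℝ) := by exact_mod_cast hn
  set X : Fin n → Vec k := fun i => φ i y - φ i (w i) with hX
  set μ : Vec k := (n : ℝ)⁻¹ • ∑ j : Fin n, X j with hμ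
  set A : Vec k := (n : ℝ)⁻¹ • ∑ i : Fin n, φ i y with hA
  have hrewrite : ∀ i : Fin n,
      φ i y - φ i (w i) + (n : ℝ)⁻¹ • ∑ i' : Fin n, φ i' (w i') = A + (X i - μ) := by
    intro i
    rw [hA, hμ, hX]
    simp only [Finset.smul_sum, Finset.sum_sub_distrib, smul_sub]
    abel
  have step1 : ∑ i : Fin n,
      ‖φ i y - φ i (w i) + (n : ℝ)⁻¹ • ∑ i' : Fin n, φ i' (w i')‖ ^ 2
      ≤ ∑ i : Fin n, (2 * ‖A‖ ^ 2 + 2 * ‖X i - μ‖ ^ 2) := by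
    apply Finset.sum_le_sum
    intro i _
    rw [hrewrite i]
    exact sq_add_le A (X i - μ)
  have step2 : ∑ i : Fin n, ‖X i - μ‖ ^ 2 ≤ ∑ i : Fin n, ‖X i‖ ^ 2 :=
    var_le_second_moment hn X
  have step3 : ∑ i : Fin n, ‖X i‖ ^ 2 ≤ ∑ i : Fin n, L' ^ 2 * ‖y - w i‖ ^ 2 := by
    apply Finset.sum_le_sum
    intro i _
    have h := hlip i y (w i)
    have h0 : (0 : ℝ) ≤ ‖X i‖ := norm_nonneg _
    nlinarith [norm_nonneg (y - w i)]
  have hsum : ∑ i : Fin n, (2 * ‖A‖ ^ 2 + 2 * ‖X i - μ‖ ^ 2)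
      = (n : ℝ) * (2 * ‖A‖ ^ 2) + 2 * ∑ i : Fin n, ‖X i - μ‖ ^ 2 := by
    rw [Finset.sum_add_distrib, Finset.sum_const, ← Finset.mul_sum]
    simp [nsmul_eq_mul]
  have key : ∑ i : Fin n,
      ‖φ i y - φ i (w i) + (n : ℝ)⁻¹ • ∑ i' : Fin n, φ i' (w i')‖ ^ 2
      ≤ (n : ℝ) * (2 * ‖A‖ ^ 2) + 2 * L' ^ 2 * ∑ i : Fin n, ‖y - w i‖ ^ 2 := by
    calc _ ≤ ∑ i : Fin n, (2 * ‖A‖ ^ 2 + 2 * ‖X i - μ‖ ^ 2) := step1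
      _ = (n : ℝ) * (2 * ‖A‖ ^ 2) + 2 * ∑ i : Fin n, ‖X i - μ‖ ^ 2 := hsum
      _ ≤ (n : ℝ) * (2 * ‖A‖ ^ 2) + 2 * ∑ i : Fin n, L' ^ 2 * ‖y - w i‖ ^ 2 := by
          linarith [step2.trans step3]
      _ = (n : ℝ) * (2 * ‖A‖ ^ 2) + 2 * L' ^ 2 * ∑ i : Fin n, ‖y - w i‖ ^ 2 := by
          rw [← Finset.mul_sum]; ring
  rw [inv_mul_le_iff₀ hn']
  calc _ ≤ (n : ℝ) * (2 * ‖A‖ ^ 2) + 2 * L' ^ 2 * ∑ i : Fin n, ‖y - w i‖ ^ 2 := key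
    _ = (n : ℝ) * (2 * ‖A‖ ^ 2 + 2 * L' ^ 2 * ((n : ℝ)⁻¹ * ∑ i : Fin n, ‖y - w i‖ ^ 2)) := by
        field_simp
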